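/- Let Y_x and E_x be functions of x that both tend to infinity as x → ∞. For each positive integer n write n = n₁ n₂ where n₁ is the largest divisor of n all of whose prime factors are ≤ Y_x (so every prime factor of n₂ exceeds Y_x). Then #{n ≤ x : n₁ ≥ Y_x^{E_x}} = o(x) as x → ∞. -/

import Mathlib

open Finset Filter

open scoped Classical in
/-- The `Y`-smooth part of `n`: the largest divisor of `n` all of whose prime
factors are `≤ Y`. -/
noncomputable def smoothPart (Y : ℝ) (n : ℕ) : ℕ :=
  ∏ p ∈ n.primeFactors.filter (fun p : ℕ => (p : ℝ) ≤ Y), p ^ n.factorization p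


/-- Chebyshev-type bound from the primorial. -/
lemma mySum_log_primes_le (N : ℕ) :
    ∑ p ∈ (Finset.range (N+1)).filter Nat.Prime, Real.log p ≤ N * Real.log 4 := by
  have h1 : ∑ p ∈ (Finset.range (N+1)).filter Nat.Prime, Real.log p
      = Real.log (primorial N) := by
    rw [primorial, Nat.cast_prod, Real.log_prod]
    intro p hp
    exact_mod_cast (Nat.Prime.pos (Finset.mem_filter.mp hp).2).ne'
  rw [h1]
  calc Real.log (primorial N) ≤ Real.log ((4:ℝ)^N) := by
        apply Real.log_le_log (by exact_mod_cast primorial_pos N)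
        exact_mod_cast primorial_le_4_pow N
    _ = N * Real.log 4 := by rw [Real.log_pow]

noncomputable def myPf (N : ℕ) : ℝ :=
  ∑ p ∈ (Finset.range (N+1)).filter Nat.Prime, Real.log p / p

lemma myPf_half {N : ℕ} (hN : 2 ≤ N) : myPf N ≤ myPf (N/2) + 4 * Real.log 2 := by
  have hNpos : (0:ℝ) < N := by positivity
  have hsplit : myPf N = myPf (N/2)
      + ∑ p ∈ Finset.Ico (N/2+1) (N+1), (if p.Prime then Real.log p / p else 0) := by
    rw [myPf, myPf, Finset.sum_filter, Finset.sum_filter, Finset.range_eq_Ico,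
      ← Finset.sum_Ico_consecutive _ (Nat.zero_le (N/2+1)) (by omega : N/2+1 ≤ N+1), Finset.range_eq_Ico]
  rw [hsplit]
  gcongr
  calc ∑ p ∈ Finset.Ico (N/2+1) (N+1), (if p.Prime then Real.log p / p else 0)
      ≤ ∑ p ∈ Finset.Ico (N/2+1) (N+1), (2/N) * (if p.Prime then Real.log p else 0) := by
        apply Finset.sum_le_sum
        intro p hp
        rw [Finset.mem_Ico] at hp
        by_cases hprime : p.Prime
        · simp only [hprime, if_true]
          have hppos : (0:ℝ) < p := by exact_mod_cast hprime.pos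
          have hN2p : (N:ℝ) ≤ 2 * p := by
            exact_mod_cast (by omega : N ≤ 2*p)
          have hlogp : 0 ≤ Real.log p := Real.log_nonneg (by exact_mod_cast hprime.one_lt.le)
          rw [div_eq_mul_inv, mul_comm]
          apply mul_le_mul_of_nonneg_right _ hlogp
          rw [inv_eq_one_div, div_le_div_iff₀ hppos hNpos]
          linarith
        · simp [hprime]
    _ = (2/N) * ∑ p ∈ Finset.Ico (N/2+1) (N+1), (if p.Prime then Real.log p else 0) := by
        rw [Finset.mul_sum]
    _ ≤ (2/N) * ∑ p ∈ Finset.range (N+1), (if p.Prime then Real.log p else 0) := by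
        apply mul_le_mul_of_nonneg_left _ (by positivity)
        apply Finset.sum_le_sum_of_subset_of_nonneg
        · rw [Finset.range_eq_Ico]
          exact Finset.Ico_subset_Ico (Nat.zero_le _) le_rfl
        · intro p _ _
          by_cases hprime : p.Prime
          · simp only [hprime, if_true]
            exact Real.log_nonneg (by exact_mod_cast hprime.one_lt.le)
          · simp [hprime]
    _ ≤ (2/N) * (N * Real.log 4) := by
        apply mul_le_mul_of_nonneg_left _ (by positivity)
        rw [← Finset.sum_filter]
        exact mySum_log_primes_le N
    _ = 4 * Real.log 2 := by
        have h4 : Real.log 4 = 2 * Real.log 2 := by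
          rw [show (4:ℝ) = 2^2 by norm_num, Real.log_pow]; push_cast; ring
        rw [h4]; field_simp; ring

lemma myPf_bound (N : ℕ) : myPf N ≤ (Nat.log 2 N + 1 : ℕ) * (4 * Real.log 2) := by
  induction N using Nat.strong_induction_on with
  | _ N ih =>
    have hlog2 : (0:ℝ) < Real.log 2 := Real.log_pos (by norm_num)
    rcases le_or_gt N 1 with h | h
    · have hempty : (Finset.range (N+1)).filter Nat.Prime = ∅ := by
        interval_cases N <;> decide
      rw [myPf, hempty, Finset.sum_empty]
      positivity
    · have h2 : 2 ≤ N := h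
      have hrec := ih (N/2) (Nat.div_lt_self (by omega) (by omega))
      have hhalf := myPf_half h2
      have hlogdiv : Nat.log 2 (N/2) = Nat.log 2 N - 1 := Nat.log_div_base 2 N
      have hge : 1 ≤ Nat.log 2 N := Nat.log_pos (by norm_num) h2
      have hcast : ((Nat.log 2 (N/2) + 1 : ℕ) : ℝ) = (Nat.log 2 N : ℝ) := by
        rw [hlogdiv]
        push_cast [Nat.cast_sub hge]
        ring
      calc myPf N ≤ myPf (N/2) + 4 * Real.log 2 := hhalf
        _ ≤ (Nat.log 2 (N/2) + 1 : ℕ) * (4 * Real.log 2) + 4 * Real.log 2 := by linarith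
        _ = (Nat.log 2 N + 1 : ℕ) * (4 * Real.log 2) := by
            rw [hcast]; push_cast; ring

lemma myPf_le {N : ℕ} (hN : 1 ≤ N) : myPf N ≤ 4 * Real.log N + 4 := by
  have hlog2 : (0:ℝ) < Real.log 2 := Real.log_pos (by norm_num)
  have h1 : (Nat.log 2 N : ℝ) * Real.log 2 ≤ Real.log N := by
    calc (Nat.log 2 N : ℝ) * Real.log 2 = Real.log ((2:ℝ) ^ (Nat.log 2 N)) := by
          rw [Real.log_pow]
      _ ≤ Real.log N := by
          apply Real.log_le_log (by positivity)
          exact_mod_cast Nat.pow_log_le_self 2 (by omega)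
  have h2 : Real.log 2 ≤ 1 := by
    have := Real.log_le_sub_one_of_pos (by norm_num : (0:ℝ) < 2)
    linarith
  have := myPf_bound N
  push_cast at this
  nlinarith [this]


lemma mySum_fact_eq (p x : ℕ) :
    ∑ n ∈ Finset.Icc 1 x, n.factorization p = (Nat.factorial x).factorization p := by
  induction x with
  | zero => simp
  | succ x ih =>
    rw [Finset.sum_Icc_succ_top (by omega : 1 ≤ x + 1), ih, Nat.factorial_succ,
      Nat.factorization_mul (by omega) (Nat.factorial_ne_zero x)]
    simp [add_comm]

lemma mySum_fact_le {p : ℕ} (hp : p.Prime) (x : ℕ) :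
    ∑ n ∈ Finset.Icc 1 x, (n.factorization p : ℝ) ≤ x / (p - 1) := by
  haveI : Fact p.Prime := ⟨hp⟩
  have hp2 : 2 ≤ p := hp.two_le
  have hppos : (0:ℝ) < p := by exact_mod_cast hp.pos
  have hp1 : (1:ℝ) < p := by exact_mod_cast hp.one_lt
  set b := Nat.log p x + 1 with hb
  have hleg : (Nat.factorial x).factorization p = ∑ i ∈ Finset.Ico 1 b, x / p ^ i := by
    rw [Nat.factorization_def _ hp]
    exact padicValNat_factorial (by omega)
  have hcast : (∑ n ∈ Finset.Icc 1 x, (n.factorization p : ℝ))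
      = ((∑ i ∈ Finset.Ico 1 b, x / p ^ i : ℕ) : ℝ) := by
    rw [← hleg, ← mySum_fact_eq p x]
    push_cast
    rfl
  rw [hcast]
  push_cast
  have hstep : ∀ i : ℕ, ((x / p ^ i : ℕ) : ℝ) ≤ (x:ℝ) * (1/(p:ℝ))^i := by
    intro i
    have h := Nat.cast_div_le (m := x) (n := p ^ i) (α := ℝ)
    push_cast at h
    calc ((x / p ^ i : ℕ) : ℝ) ≤ (x:ℝ)/((p:ℝ)^i) := h
      _ = (x:ℝ) * (1/(p:ℝ))^i := by rw [div_eq_mul_inv, one_div, inv_pow]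
  calc ∑ i ∈ Finset.Ico 1 b, ((x / p ^ i : ℕ) : ℝ)
      ≤ ∑ i ∈ Finset.Ico 1 b, (x : ℝ) * (1/(p:ℝ))^i :=
        Finset.sum_le_sum (fun i _ => hstep i)
    _ = (x:ℝ) * ∑ i ∈ Finset.Ico 1 b, (1/(p:ℝ))^i := by rw [Finset.mul_sum]
    _ ≤ (x:ℝ) * (1/((p:ℝ)-1)) := by
        apply mul_le_mul_of_nonneg_left _ (by positivity)
        set r : ℝ := 1/(p:ℝ) with hr
        have hr0 : 0 ≤ r := by positivity
        have hr1 : r < 1 := by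
          rw [hr, div_lt_one hppos]; exact hp1
        have hrne : r ≠ 1 := ne_of_lt hr1
        have h1r : (0:ℝ) < 1 - r := by linarith
        have hIco : ∑ i ∈ Finset.Ico 1 b, r^i = (∑ i ∈ Finset.range b, r^i) - 1 := by
          rw [Finset.range_eq_Ico,
            ← Finset.sum_Ico_consecutive _ (Nat.zero_le 1) (by omega : 1 ≤ b)]
          simp
        have h2 : ∑ i ∈ Finset.range b, r^i = (1 - r^b)/(1-r) := by
          rw [geom_sum_eq hrne]
          rw [div_eq_div_iff (by intro hc; apply hrne; linarith [sub_eq_zero.mp hc]) (by linarith)]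
          ring
        have hrb : 0 ≤ r ^ b := by positivity
        have h3 : (1 - r^b)/(1-r) ≤ 1/(1-r) := by gcongr; linarith
        have hpne : (p:ℝ) ≠ 0 := ne_of_gt hppos
        have hp1ne : (p:ℝ) - 1 ≠ 0 := by intro hc; rw [sub_eq_zero] at hc; rw [← hc] at hp1; linarith
        have hfin : 1/(1-r) - 1 = 1/((p:ℝ)-1) := by
          rw [hr]
          field_simp
          ring
        linarith
    _ = (x:ℝ)/((p:ℝ)-1) := by ring


open scoped Classical in
lemma myMoment (Yx : ℝ) (hYx : 1 ≤ Yx) (x : ℕ) :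
    ∑ n ∈ Finset.Icc 1 x, Real.log (smoothPart Yx n)
      ≤ (x:ℝ) * (8 * Real.log Yx + 8) := by
  classical
  set P := (Finset.range (x+1)).filter (fun p : ℕ => p.Prime ∧ (p:ℝ) ≤ Yx) with hP
  have hstep1 : ∀ n ∈ Finset.Icc 1 x, Real.log (smoothPart Yx n)
      = ∑ p ∈ P, (n.factorization p : ℝ) * Real.log p := by
    intro n hn
    rw [Finset.mem_Icc] at hn
    have hn0 : n ≠ 0 := by omega
    have hlog : Real.log (smoothPart Yx n)
        = ∑ p ∈ n.primeFactors.filter (fun p : ℕ => (p:ℝ) ≤ Yx),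
            (n.factorization p : ℝ) * Real.log p := by
      rw [smoothPart, Nat.cast_prod, Real.log_prod]
      · apply Finset.sum_congr rfl
        intro p _
        push_cast
        rw [Real.log_pow]
      · intro p hp
        have hprime : p.Prime := Nat.prime_of_mem_primeFactors (Finset.mem_filter.mp hp).1
        exact_mod_cast pow_ne_zero _ hprime.pos.ne'
    rw [hlog]
    apply Finset.sum_subset
    · intro p hp
      rw [Finset.mem_filter] at hp
      have hmem := Nat.mem_primeFactors.mp hp.1
      rw [hP, Finset.mem_filter, Finset.mem_range]
      refine ⟨?_, hmem.1, hp.2⟩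
      have : p ≤ n := Nat.le_of_dvd (by omega) hmem.2.1
      omega
    · intro p hpP hpn
      rw [hP, Finset.mem_filter] at hpP
      have : p ∉ n.primeFactors := by
        intro hc
        exact hpn (Finset.mem_filter.mpr ⟨hc, hpP.2.2⟩)
      rw [← Nat.support_factorization, Finsupp.notMem_support_iff] at this
      rw [this]
      simp
  set M := ⌊Yx⌋₊ with hM
  have hM1 : 1 ≤ M := by
    rw [hM]
    exact_mod_cast Nat.le_floor (by exact_mod_cast hYx)
  calc ∑ n ∈ Finset.Icc 1 x, Real.log (smoothPart Yx n)
      = ∑ n ∈ Finset.Icc 1 x, ∑ p ∈ P, (n.factorization p : ℝ) * Real.log p :=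
        Finset.sum_congr rfl hstep1
    _ = ∑ p ∈ P, (∑ n ∈ Finset.Icc 1 x, (n.factorization p : ℝ)) * Real.log p := by
        rw [Finset.sum_comm]
        exact Finset.sum_congr rfl (fun p _ => (Finset.sum_mul _ _ _).symm)
    _ ≤ ∑ p ∈ P, ((x:ℝ) * 2) * (Real.log p / p) := by
        apply Finset.sum_le_sum
        intro p hp
        rw [hP, Finset.mem_filter] at hp
        have hprime : p.Prime := hp.2.1
        have hp2 : (2:ℝ) ≤ p := by exact_mod_cast hprime.two_le
        have hlogp : 0 ≤ Real.log p := Real.log_nonneg (by linarith)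
        have h1 := mySum_fact_le hprime x
        calc (∑ n ∈ Finset.Icc 1 x, (n.factorization p : ℝ)) * Real.log p
            ≤ ((x:ℝ) / ((p:ℝ) - 1)) * Real.log p :=
              mul_le_mul_of_nonneg_right h1 hlogp
          _ ≤ ((x:ℝ) * 2 / p) * Real.log p := by
              apply mul_le_mul_of_nonneg_right _ hlogp
              rw [div_le_div_iff₀ (by linarith) (by linarith)]
              nlinarith [Nat.cast_nonneg (α := ℝ) x]
          _ = ((x:ℝ) * 2) * (Real.log p / p) := by ring
    _ = ((x:ℝ) * 2) * ∑ p ∈ P, Real.log p / p := by rw [Finset.mul_sum]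
    _ ≤ ((x:ℝ) * 2) * myPf M := by
        apply mul_le_mul_of_nonneg_left _ (by positivity)
        rw [myPf]
        apply Finset.sum_le_sum_of_subset_of_nonneg
        · intro p hp
          rw [hP, Finset.mem_filter] at hp
          rw [Finset.mem_filter, Finset.mem_range]
          refine ⟨?_, hp.2.1⟩
          have : p ≤ M := Nat.le_floor hp.2.2
          omega
        · intro p hp _
          have hprime : p.Prime := (Finset.mem_filter.mp hp).2
          have hp2 : (2:ℝ) ≤ p := by exact_mod_cast hprime.two_le
          have hlogp : 0 ≤ Real.log p := Real.log_nonneg (by linarith)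
          positivity
    _ ≤ ((x:ℝ) * 2) * (4 * Real.log M + 4) := by
        apply mul_le_mul_of_nonneg_left (myPf_le hM1) (by positivity)
    _ ≤ ((x:ℝ) * 2) * (4 * Real.log Yx + 4) := by
        apply mul_le_mul_of_nonneg_left _ (by positivity)
        have hMle : (M:ℝ) ≤ Yx := Nat.floor_le (by linarith)
        have : Real.log M ≤ Real.log Yx :=
          Real.log_le_log (by exact_mod_cast hM1) hMle
        linarith
    _ = (x:ℝ) * (8 * Real.log Yx + 8) := by ring

open scoped Classical in
/-- If `Y_x, E_x → ∞`, then the number of `n ≤ x` whose `Y_x`-smooth part is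
at least `Y_x ^ E_x` is `o(x)`. -/
theorem smooth_part_large_density_zero (Y E : ℕ → ℝ)
    (hY : Tendsto Y atTop atTop) (hE : Tendsto E atTop atTop) :
    Tendsto (fun x : ℕ =>
      (((Finset.Icc 1 x).filter (fun n =>
        (Y x) ^ (E x) ≤ (smoothPart (Y x) n : ℝ))).card : ℝ) / x)
      atTop (nhds 0) := by
  have h3 : ∀ᶠ x in atTop, (3:ℝ) ≤ Y x := hY.eventually_ge_atTop 3
  have h1E : ∀ᶠ x in atTop, (1:ℝ) ≤ E x := hE.eventually_ge_atTop 1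
  have hx1 : ∀ᶠ x : ℕ in atTop, 1 ≤ x := eventually_ge_atTop 1
  apply squeeze_zero' (g := fun x : ℕ => 16 / E x)
  · filter_upwards with x
    positivity
  · filter_upwards [h3, h1E, hx1] with x hY3 hE1 hx
    set A := (Finset.Icc 1 x).filter (fun n =>
      (Y x) ^ (E x) ≤ (smoothPart (Y x) n : ℝ)) with hA
    have hYpos : (0:ℝ) < Y x := by linarith
    have hEpos : (0:ℝ) < E x := by linarith
    have hxpos : (0:ℝ) < (x:ℝ) := by exact_mod_cast hx
    have hlogY : 1 ≤ Real.log (Y x) := by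
      rw [Real.le_log_iff_exp_le hYpos]
      calc Real.exp 1 ≤ 2.7182818286 := le_of_lt Real.exp_one_lt_d9
        _ ≤ 3 := by norm_num
        _ ≤ Y x := hY3
    have hsm1 : ∀ n : ℕ, 0 < smoothPart (Y x) n := by
      intro n
      apply Finset.prod_pos
      intro p hp
      exact pow_pos (Nat.prime_of_mem_primeFactors (Finset.mem_filter.mp hp).1).pos _
    have hkey : ∀ n ∈ A, E x * Real.log (Y x) ≤ Real.log (smoothPart (Y x) n) := by
      intro n hn
      rw [hA, Finset.mem_filter] at hn
      calc E x * Real.log (Y x) = Real.log ((Y x) ^ (E x)) := (Real.log_rpow hYpos _).symm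
        _ ≤ _ := Real.log_le_log (Real.rpow_pos_of_pos hYpos _) hn.2
    have hc1 : (A.card : ℝ) * (E x * Real.log (Y x))
        ≤ ∑ n ∈ A, Real.log (smoothPart (Y x) n) := by
      have := Finset.card_nsmul_le_sum A _ _ hkey
      rwa [nsmul_eq_mul] at this
    have hc2 : ∑ n ∈ A, Real.log (smoothPart (Y x) n)
        ≤ ∑ n ∈ Finset.Icc 1 x, Real.log (smoothPart (Y x) n) := by
      apply Finset.sum_le_sum_of_subset_of_nonneg (Finset.filter_subset _ _)
      intro n _ _
      apply Real.log_nonneg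
      exact_mod_cast hsm1 n
    have hc3 := myMoment (Y x) (by linarith) x
    have hc4 : (x:ℝ) * (8 * Real.log (Y x) + 8) ≤ 16 * x * Real.log (Y x) := by
      nlinarith
    have hcard : (A.card : ℝ) * E x ≤ 16 * x := by
      have hlY : (0:ℝ) < Real.log (Y x) := by linarith
      apply le_of_mul_le_mul_right _ hlY
      calc (A.card : ℝ) * E x * Real.log (Y x)
          = (A.card : ℝ) * (E x * Real.log (Y x)) := by ring
        _ ≤ 16 * x * Real.log (Y x) := by linarith
    rw [div_le_div_iff₀ hxpos hEpos]
    linarith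
  · exact Tendsto.div_atTop tendsto_const_nhds hE
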